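/- Let C be a pointed category with finite limits and cokernels, and E a class of morphisms containing all isomorphisms. Assume: (a) E is pullback stable; (c) the E-short five lemma holds (in any commutative diagram with two short sequences K→A→B and K→A'→B, where k = ker(f), k' = ker(f'), f, f' ∈ E, and the outer vertical maps are identities, the middle vertical map w is an isomorphism); every morphism in E is a regular epimorphism; and for every f ∈ E, coker(ker(f)) ∈ E. Then every morphism in E is a normal epimorphism. -/

import Mathlib

open CategoryTheory CategoryTheory.Limits ZeroObject

universe v u v' u'

namespace RelHom

variable {C : Type u} [Category.{v} C]

/-- `E` is stable under pullback. -/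
def PullbackStable (E : MorphismProperty C) : Prop :=
  ∀ ⦃P X Y Z : C⦄ (fst : P ⟶ X) (snd : P ⟶ Y) (f : X ⟶ Z) (g : Y ⟶ Z),
    IsPullback fst snd f g → E g → E fst

/-- `E` contains all isomorphisms. -/
def ContainsIsos (E : MorphismProperty C) : Prop :=
  ∀ ⦃X Y : C⦄ (f : X ⟶ Y), IsIso f → E f

/-- `E` is closed under composition. -/
def CompClosed (E : MorphismProperty C) : Prop :=
  ∀ ⦃X Y Z : C⦄ (f : X ⟶ Y) (g : Y ⟶ Z), E f → E g → E (f ≫ g)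

/-- If `f ∈ E` and `f ≫ g ∈ E` then `g ∈ E`. -/
def RightCancel (E : MorphismProperty C) : Prop :=
  ∀ ⦃X Y Z : C⦄ (f : X ⟶ Y) (g : Y ⟶ Z), E f → E (f ≫ g) → E g

variable [HasZeroMorphisms C]

/-- The `E`-short five lemma. -/
def ShortFive (E : MorphismProperty C) : Prop :=
  ∀ ⦃K A A' B : C⦄ (k : K ⟶ A) (k' : K ⟶ A') (f : A ⟶ B) (f' : A' ⟶ B) (w : A ⟶ A')
    (hk : k ≫ f = 0) (hk' : k' ≫ f' = 0),
    IsLimit (KernelFork.ofι k hk) → IsLimit (KernelFork.ofι k' hk') →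
    E f → E f' → w ≫ f' = f → k ≫ w = k' → IsIso w

/-- Every morphism in `E` is a normal epimorphism. -/
def AllNormalEpi (E : MorphismProperty C) : Prop :=
  ∀ ⦃X Y : C⦄ (f : X ⟶ Y), E f → Nonempty (NormalEpi f)

/-- Condition (f): (mono)∘(E) composites admit (E, mono)-factorizations. -/
def MonoFactor (E : MorphismProperty C) : Prop :=
  ∀ ⦃X Y Z : C⦄ (e : X ⟶ Y) (m : Y ⟶ Z), E e → Mono m →
    ∃ (W : C) (e' : X ⟶ W) (m' : W ⟶ Z), E e' ∧ Mono m' ∧ e' ≫ m' = e ≫ m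

/-- Condition (g): the kernel-ladder condition. -/
def KernelLadder (E : MorphismProperty C) : Prop :=
  ∀ ⦃K K' A A' B : C⦄ (k : K ⟶ A) (k' : K' ⟶ A') (f : A ⟶ B) (f' : A' ⟶ B)
    (u : K ⟶ K') (w : A ⟶ A') (hk : k ≫ f = 0) (hk' : k' ≫ f' = 0),
    IsLimit (KernelFork.ofι k hk) → IsLimit (KernelFork.ofι k' hk') →
    E f → E f' → E u → w ≫ f' = f → k ≫ w = u ≫ k' → E w

/-- `(C, E)` is a relative weakly homological category: conditions (a)–(e). -/
structure WeaklyHomological (E : MorphismProperty C) : Prop where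
  contains_isos : ContainsIsos E
  stable : PullbackStable E
  normal_epi : AllNormalEpi E
  short_five : ShortFive E
  comp_closed : CompClosed E
  right_cancel : RightCancel E

/-- `(C, E)` is a relative homological category: conditions (a)–(g). -/
structure Homological (E : MorphismProperty C) extends WeaklyHomological E : Prop where
  mono_factor : MonoFactor E
  ladder : KernelLadder E

/-- A composable pair is `E`-exact at the middle object if the incoming morphism
factors as a morphism in `E` followed by the kernel of the outgoing morphism. -/
def EExactAt (E : MorphismProperty C) ⦃X Y Z : C⦄ (f : X ⟶ Y) (g : Y ⟶ Z) : Prop :=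
  ∃ (W : C) (e : X ⟶ W) (m : W ⟶ Y) (hm : m ≫ g = 0),
    E e ∧ Nonempty (IsLimit (KernelFork.ofι m hm)) ∧ e ≫ m = f

/-- `0 ⟶ X ⟶ Y ⟶ Z ⟶ 0` is an `E`-exact (short exact) sequence:
`f` is the kernel of `g` and `g ∈ E`. -/
def ShortEExact (E : MorphismProperty C) ⦃X Y Z : C⦄ (f : X ⟶ Y) (g : Y ⟶ Z)
    (h : f ≫ g = 0) : Prop :=
  Nonempty (IsLimit (KernelFork.ofι f h)) ∧ E g

/-- The class of split epimorphisms. -/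
def SplitEpis : MorphismProperty C := fun _ _ f => IsSplitEpi f

/-- The class of regular epimorphisms. -/
def RegEpis : MorphismProperty C := fun _ _ f => Nonempty (RegularEpi f)

theorem statement1 [HasZeroObject C] [HasFiniteLimits C] [HasCokernels C]
    (E : MorphismProperty C) (hiso : ContainsIsos E) (hstb : PullbackStable E)
    (h5 : ShortFive E)
    (hreg : ∀ ⦃X Y : C⦄ (f : X ⟶ Y), E f → Nonempty (RegularEpi f))
    (hcok : ∀ ⦃X Y : C⦄ (f : X ⟶ Y), E f → E (cokernel.π (kernel.ι f))) :
    AllNormalEpi E := by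
  intro X Y f hf
  obtain ⟨hfre⟩ := hreg f hf
  haveI : RegularEpi f := hfre
  haveI : Epi f := RegularEpi.epi f hfre
  set k : kernel f ⟶ X := kernel.ι f with hkdef
  set q : X ⟶ cokernel k := cokernel.π k with hqdef
  have hq : E q := hcok f hf
  let w : cokernel k ⟶ Y := cokernel.desc k f (kernel.condition f)
  have hqw : q ≫ w = f := cokernel.π_desc k f (kernel.condition f)
  -- pullback of f and w
  let P := pullback f w
  let fst : P ⟶ X := pullback.fst f w
  let snd : P ⟶ cokernel k := pullback.snd f w
  have hPB : IsPullback fst snd f w := IsPullback.of_hasPullback f w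
  have hsndE : E snd := hstb snd fst w f hPB.flip hf
  -- the section s
  have hsw : (𝟙 X) ≫ f = q ≫ w := by rw [Category.id_comp, hqw]
  let s : X ⟶ P := pullback.lift (𝟙 X) q hsw
  have hsfst : s ≫ fst = 𝟙 X := pullback.lift_fst _ _ _
  have hssnd : s ≫ snd = q := pullback.lift_snd _ _ _
  -- k is a kernel of q
  have hkq : k ≫ q = 0 := cokernel.condition k
  have limq : IsLimit (KernelFork.ofι k hkq) := by
    refine KernelFork.IsLimit.ofι' k hkq (fun {A} x hx => ?_)
    have hxf : x ≫ f = 0 := by rw [← hqw, ← Category.assoc, hx, zero_comp]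
    exact ⟨kernel.lift f x hxf, kernel.lift_ι f x hxf⟩
  -- k' is a kernel of snd
  have hk0 : k ≫ f = (0 : kernel f ⟶ cokernel k) ≫ w := by
    rw [kernel.condition, zero_comp]
  let k' : kernel f ⟶ P := pullback.lift k 0 hk0
  have hk'fst : k' ≫ fst = k := pullback.lift_fst _ _ _
  have hk'snd : k' ≫ snd = 0 := pullback.lift_snd _ _ _
  haveI : Mono k' := mono_of_mono_fac hk'fst
  have limsnd : IsLimit (KernelFork.ofι k' hk'snd) := by
    refine KernelFork.IsLimit.ofι' k' hk'snd (fun {A} x hx => ?_)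
    have hxf : (x ≫ fst) ≫ f = 0 := by
      rw [Category.assoc, hPB.w, ← Category.assoc, hx, zero_comp]
    refine ⟨kernel.lift f (x ≫ fst) hxf, ?_⟩
    apply pullback.hom_ext
    · rw [Category.assoc, hk'fst]; exact kernel.lift_ι f (x ≫ fst) hxf
    · show _ ≫ snd = x ≫ snd; simp only [Category.assoc, hk'snd, comp_zero, hx]
  -- short five lemma gives s iso
  have hks : k ≫ s = k' := by
    apply pullback.hom_ext
    · rw [Category.assoc, hsfst, Category.comp_id, hk'fst]
    · rw [Category.assoc, hssnd, hkq, hk'snd]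
  haveI hsiso : IsIso s := h5 k k' q snd s hkq hk'snd limq limsnd hq hsndE hssnd hks
  -- hence snd = fst ≫ q
  have hfq : fst ≫ q = snd := by
    rw [← cancel_epi s, ← Category.assoc, hsfst, Category.id_comp, hssnd]
  -- q coequalizes the kernel pair of f
  have hcoeq : hfre.left ≫ q = hfre.right ≫ q := by
    have hlw : hfre.left ≫ f = (hfre.right ≫ q) ≫ w := by
      rw [Category.assoc, hqw, hfre.w]
    let t : hfre.W ⟶ P := pullback.lift hfre.left (hfre.right ≫ q) hlw
    have h1 : t ≫ fst = hfre.left := pullback.lift_fst _ _ _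
    have h2 : t ≫ snd = hfre.right ≫ q := pullback.lift_snd _ _ _
    calc hfre.left ≫ q = t ≫ fst ≫ q := by rw [← Category.assoc, h1]
      _ = t ≫ snd := by rw [hfq]
      _ = hfre.right ≫ q := h2
  -- get the inverse of w
  let v : Y ⟶ cokernel k := Cofork.IsColimit.desc hfre.isColimit q hcoeq
  have hfv : f ≫ v = q := Cofork.IsColimit.π_desc' hfre.isColimit q hcoeq
  have hwv : w ≫ v = 𝟙 _ := by
    rw [← cancel_epi q, ← Category.assoc, hqw, hfv, Category.comp_id]
  have hvw : v ≫ w = 𝟙 _ := by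
    rw [← cancel_epi f, ← Category.assoc, hfv, hqw, Category.comp_id]
  haveI hwiso : IsIso w := ⟨v, hwv, hvw⟩
  -- f is the cokernel of its kernel
  refine ⟨⟨kernel f, k, kernel.condition f, ?_⟩⟩
  refine CokernelCofork.IsColimit.ofπ' f (kernel.condition f) (fun {A} x hx => ?_)
  refine ⟨inv w ≫ cokernel.desc k x hx, ?_⟩
  have hfi : f ≫ inv w = q := by
    rw [← cancel_mono w, Category.assoc, IsIso.inv_hom_id, Category.comp_id, hqw]
  rw [← Category.assoc, hfi, cokernel.π_desc]

end RelHom
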